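/- Let k be a field and q a primitive t-th root of unity in k with t > 1, and let σ(h) = qh on k[h^{±1}], A = k[h^{±1}](σ, h^d − 1). The assignment ψ(h) = h^{t+1}, ψ(x) = U(h) x with U(h) = \sum_{l=0}^t q^{ld} h^{dl}, ψ(y) = y defines a k-algebra endomorphism of A that is not surjective (hence not an automorphism). -/

import Mathlib

/-- Relations defining the generalized Weyl algebra `k[h^{±1}](σ, h^d − 1)` with
`σ(h) = qh`: generators `h = ι 0`, `h⁻¹ = ι 1`, `x = ι 2`, `y = ι 3`. -/
inductive GWARel (k : Type*) [Field k] (q : k) (d : ℕ) :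
    FreeAlgebra k (Fin 4) → FreeAlgebra k (Fin 4) → Prop
  | hh : GWARel k q d (FreeAlgebra.ι k 0 * FreeAlgebra.ι k 1) 1
  | hh' : GWARel k q d (FreeAlgebra.ι k 1 * FreeAlgebra.ι k 0) 1
  | xh : GWARel k q d (FreeAlgebra.ι k 2 * FreeAlgebra.ι k 0)
      (q • (FreeAlgebra.ι k 0 * FreeAlgebra.ι k 2))
  | yh : GWARel k q d (FreeAlgebra.ι k 3 * FreeAlgebra.ι k 0)
      (q⁻¹ • (FreeAlgebra.ι k 0 * FreeAlgebra.ι k 3))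
  | xy : GWARel k q d (FreeAlgebra.ι k 2 * FreeAlgebra.ι k 3)
      (q ^ d • FreeAlgebra.ι k 0 ^ d - 1)
  | yx : GWARel k q d (FreeAlgebra.ι k 3 * FreeAlgebra.ι k 2)
      (FreeAlgebra.ι k 0 ^ d - 1)

/-- The generalized Weyl algebra `A(d,q) = k[h^{±1}](σ, h^d − 1)`. -/
abbrev GWA (k : Type*) [Field k] (q : k) (d : ℕ) := RingQuot (GWARel k q d)

variable (k : Type*) [Field k] (q : k) (d : ℕ)

noncomputable def hGen : GWA k q d := RingQuot.mkAlgHom k (GWARel k q d) (FreeAlgebra.ι k 0)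
noncomputable def hInv : GWA k q d := RingQuot.mkAlgHom k (GWARel k q d) (FreeAlgebra.ι k 1)
noncomputable def xGen : GWA k q d := RingQuot.mkAlgHom k (GWARel k q d) (FreeAlgebra.ι k 2)
noncomputable def yGen : GWA k q d := RingQuot.mkAlgHom k (GWARel k q d) (FreeAlgebra.ι k 3)

/-- `h^m` for an integer `m`, via `h` and `h⁻¹`. -/
noncomputable def hZPow (m : ℤ) : GWA k q d :=
  if 0 ≤ m then hGen k q d ^ m.toNat else hInv k q d ^ (-m).toNat

section GWALemmas
variable {k q d}

lemma gwa_hh : hGen k q d * hInv k q d = 1 := by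
  have := RingQuot.mkAlgHom_rel k (GWARel.hh (k := k) (q := q) (d := d))
  simpa [hGen, hInv, map_mul, map_one] using this

lemma gwa_hh' : hInv k q d * hGen k q d = 1 := by
  have := RingQuot.mkAlgHom_rel k (GWARel.hh' (k := k) (q := q) (d := d))
  simpa [hGen, hInv, map_mul, map_one] using this

lemma gwa_xh : xGen k q d * hGen k q d = q • (hGen k q d * xGen k q d) := by
  have := RingQuot.mkAlgHom_rel k (GWARel.xh (k := k) (q := q) (d := d))
  simpa [hGen, xGen, map_mul, map_smul] using this

lemma gwa_yh : yGen k q d * hGen k q d = q⁻¹ • (hGen k q d * yGen k q d) := by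
  have := RingQuot.mkAlgHom_rel k (GWARel.yh (k := k) (q := q) (d := d))
  simpa [hGen, yGen, map_mul, map_smul] using this

lemma gwa_xy : xGen k q d * yGen k q d = q ^ d • hGen k q d ^ d - 1 := by
  have := RingQuot.mkAlgHom_rel k (GWARel.xy (k := k) (q := q) (d := d))
  simpa [hGen, xGen, yGen, map_mul, map_smul, map_sub, map_pow, map_one] using this

lemma gwa_yx : yGen k q d * xGen k q d = hGen k q d ^ d - 1 := by
  have := RingQuot.mkAlgHom_rel k (GWARel.yx (k := k) (q := q) (d := d))
  simpa [hGen, xGen, yGen, map_mul, map_sub, map_pow, map_one] using this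

lemma gwa_x_hpow (m : ℕ) :
    xGen k q d * hGen k q d ^ m = q ^ m • (hGen k q d ^ m * xGen k q d) := by
  induction m with
  | zero => simp
  | succ m ih =>
    rw [pow_succ, ← mul_assoc, ih, smul_mul_assoc, mul_assoc, gwa_xh, mul_smul_comm,
      ← mul_assoc, smul_smul, pow_succ, ← pow_succ]

lemma gwa_y_hpow (m : ℕ) :
    yGen k q d * hGen k q d ^ m = (q⁻¹) ^ m • (hGen k q d ^ m * yGen k q d) := by
  induction m with
  | zero => simp
  | succ m ih =>
    rw [pow_succ, ← mul_assoc, ih, smul_mul_assoc, mul_assoc, gwa_yh, mul_smul_comm,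
      ← mul_assoc, smul_smul, pow_succ, ← pow_succ]

lemma gwa_hpow_hinvpow (m : ℕ) : hGen k q d ^ m * hInv k q d ^ m = 1 := by
  induction m with
  | zero => simp
  | succ m ih =>
    rw [pow_succ, pow_succ']
    calc hGen k q d ^ m * hGen k q d * (hInv k q d * hInv k q d ^ m)
        = hGen k q d ^ m * (hGen k q d * hInv k q d) * hInv k q d ^ m := by
          noncomm_ring
      _ = 1 := by rw [gwa_hh, mul_one, ih]

lemma gwa_hinvpow_hpow (m : ℕ) : hInv k q d ^ m * hGen k q d ^ m = 1 := by
  induction m with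
  | zero => simp
  | succ m ih =>
    rw [pow_succ, pow_succ']
    calc hInv k q d ^ m * hInv k q d * (hGen k q d * hGen k q d ^ m)
        = hInv k q d ^ m * (hInv k q d * hGen k q d) * hGen k q d ^ m := by
          noncomm_ring
      _ = 1 := by rw [gwa_hh', mul_one, ih]

/-- `U(h)` commutes with powers of `h`. -/
lemma gwa_U_comm (t m : ℕ) :
    (∑ l ∈ Finset.range (t + 1), q ^ (l * d) • hGen k q d ^ (d * l)) * hGen k q d ^ m
      = hGen k q d ^ m * ∑ l ∈ Finset.range (t + 1), q ^ (l * d) • hGen k q d ^ (d * l) := by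
  rw [Finset.sum_mul, Finset.mul_sum]
  refine Finset.sum_congr rfl fun l _ => ?_
  rw [smul_mul_assoc, mul_smul_comm, ← pow_add, ← pow_add, add_comm]

/-- Relation `ψ(x)ψ(h) = q ψ(h)ψ(x)`. -/
lemma gwa_psi_xh {t : ℕ} (hqt : q ^ t = 1) :
    ((∑ l ∈ Finset.range (t + 1), q ^ (l * d) • hGen k q d ^ (d * l)) * xGen k q d) *
        hGen k q d ^ (t + 1)
      = q • (hGen k q d ^ (t + 1) *
          ((∑ l ∈ Finset.range (t + 1), q ^ (l * d) • hGen k q d ^ (d * l)) * xGen k q d)) := by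
  rw [mul_assoc, gwa_x_hpow, mul_smul_comm, ← mul_assoc, gwa_U_comm, mul_assoc]
  congr 1
  rw [pow_succ, hqt, one_mul]

/-- Relation `ψ(y)ψ(h) = q⁻¹ ψ(h)ψ(y)`. -/
lemma gwa_psi_yh {t : ℕ} (hqt : q ^ t = 1) :
    yGen k q d * hGen k q d ^ (t + 1)
      = q⁻¹ • (hGen k q d ^ (t + 1) * yGen k q d) := by
  rw [gwa_y_hpow]
  congr 1
  rw [pow_succ, inv_pow, hqt, inv_one, one_mul]

/-- Relation `ψ(x)ψ(y) = q^d ψ(h)^d − 1` (telescoping). -/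
lemma gwa_psi_xy {t : ℕ} (hqt : q ^ t = 1) :
    ((∑ l ∈ Finset.range (t + 1), q ^ (l * d) • hGen k q d ^ (d * l)) * xGen k q d) * yGen k q d
      = q ^ d • (hGen k q d ^ (t + 1)) ^ d - 1 := by
  rw [mul_assoc, gwa_xy, Finset.sum_mul]
  have step : ∀ l, (q ^ (l * d) • hGen k q d ^ (d * l)) * (q ^ d • hGen k q d ^ d - 1)
      = (fun l => q ^ (l * d) • hGen k q d ^ (d * l)) (l + 1)
        - (fun l => q ^ (l * d) • hGen k q d ^ (d * l)) l := by
    intro l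
    simp only [mul_sub, mul_one, smul_mul_assoc, mul_smul_comm, smul_smul, ← pow_add]
    congr 2 <;> ring
  calc ∑ l ∈ Finset.range (t + 1), (q ^ (l * d) • hGen k q d ^ (d * l)) * (q ^ d • hGen k q d ^ d - 1)
      = ∑ l ∈ Finset.range (t + 1),
          ((fun l => q ^ (l * d) • hGen k q d ^ (d * l)) (l + 1)
            - (fun l => q ^ (l * d) • hGen k q d ^ (d * l)) l) :=
        Finset.sum_congr rfl fun l _ => step l
    _ = q ^ ((t + 1) * d) • hGen k q d ^ (d * (t + 1)) - q ^ (0 * d) • hGen k q d ^ (d * 0) := by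
        rw [Finset.sum_range_sub (fun l => q ^ (l * d) • hGen k q d ^ (d * l)) (t + 1)]
    _ = q ^ d • (hGen k q d ^ (t + 1)) ^ d - 1 := by
        rw [← pow_mul]
        congr 2
        · rw [add_mul, one_mul, pow_add, pow_mul, hqt, one_pow, one_mul]
        · ring
        · simp

/-- Relation `ψ(y)ψ(x) = ψ(h)^d − 1` (telescoping). -/
lemma gwa_psi_yx {t : ℕ} (hq0 : q ≠ 0) :
    yGen k q d * ((∑ l ∈ Finset.range (t + 1), q ^ (l * d) • hGen k q d ^ (d * l)) * xGen k q d)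
      = (hGen k q d ^ (t + 1)) ^ d - 1 := by
  have hyU : yGen k q d * (∑ l ∈ Finset.range (t + 1), q ^ (l * d) • hGen k q d ^ (d * l))
      = (∑ l ∈ Finset.range (t + 1), hGen k q d ^ (d * l)) * yGen k q d := by
    rw [Finset.mul_sum, Finset.sum_mul]
    refine Finset.sum_congr rfl fun l _ => ?_
    rw [mul_smul_comm, gwa_y_hpow, smul_smul, inv_pow, mul_comm d l, mul_inv_cancel₀ (by
      exact pow_ne_zero _ hq0), one_smul]
  rw [← mul_assoc, hyU, mul_assoc, gwa_yx, Finset.sum_mul]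
  have step : ∀ l, hGen k q d ^ (d * l) * (hGen k q d ^ d - 1)
      = (fun l => hGen k q d ^ (d * l)) (l + 1) - (fun l => hGen k q d ^ (d * l)) l := by
    intro l
    simp only [mul_sub, mul_one, ← pow_add]
    congr 2
  calc ∑ l ∈ Finset.range (t + 1), hGen k q d ^ (d * l) * (hGen k q d ^ d - 1)
      = ∑ l ∈ Finset.range (t + 1),
          ((fun l => hGen k q d ^ (d * l)) (l + 1) - (fun l => hGen k q d ^ (d * l)) l) :=
        Finset.sum_congr rfl fun l _ => step l
    _ = hGen k q d ^ (d * (t + 1)) - hGen k q d ^ (d * 0) := by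
        rw [Finset.sum_range_sub (fun l => hGen k q d ^ (d * l)) (t + 1)]
    _ = (hGen k q d ^ (t + 1)) ^ d - 1 := by
        rw [← pow_mul, mul_comm (t + 1) d]
        simp

end GWALemmas

section Rep
variable {k}

/-- The operator `e_n ↦ a n • e_{n+s}` on `ℤ →₀ k`. -/
noncomputable def opE (a : ℤ → k) (s : ℤ) : Module.End k (ℤ →₀ k) :=
  Finsupp.lsum k fun n => a n • Finsupp.lsingle (n + s)

lemma opE_single (a : ℤ → k) (s : ℤ) (n : ℤ) (c : k) :
    opE a s (Finsupp.single n c) = Finsupp.single (n + s) (a n * c) := by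
  rw [opE, Finsupp.lsum_single, LinearMap.smul_apply, Finsupp.lsingle_apply,
    Finsupp.smul_single', mul_comm]

lemma opE_apply (a : ℤ → k) (s : ℤ) (f : ℤ →₀ k) (m : ℤ) :
    opE a s f m = a (m - s) * f (m - s) := by
  induction f using Finsupp.induction_linear with
  | zero => simp
  | add f g hf hg => simp [map_add, hf, hg, mul_add]
  | single n c =>
    rw [opE_single]
    rcases eq_or_ne (n + s) m with h | h
    · subst h
      rw [Finsupp.single_eq_same, add_sub_cancel_right, Finsupp.single_eq_same, mul_comm]
    · rw [Finsupp.single_apply, if_neg h, Finsupp.single_apply, if_neg (by omega), mul_zero]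

lemma opE_mul (a b : ℤ → k) (s r : ℤ) :
    opE a s * opE b r = opE (fun n => a (n + r) * b n) (r + s) := by
  apply Finsupp.lhom_ext
  intro n c
  simp only [Module.End.mul_apply, opE_single]
  rw [add_assoc, mul_assoc]

lemma opE_smul (c : k) (a : ℤ → k) (s : ℤ) :
    c • opE a s = opE (fun n => c * a n) s := by
  apply Finsupp.lhom_ext
  intro n b
  rw [LinearMap.smul_apply, opE_single, opE_single, Finsupp.smul_single, smul_eq_mul, mul_assoc]

lemma opE_one : opE (fun _ => (1 : k)) 0 = 1 := by
  apply Finsupp.lhom_ext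
  intro n c
  rw [opE_single, Module.End.one_apply, add_zero, one_mul]

lemma opE_eq (a b : ℤ → k) (s r : ℤ) (h : ∀ n, a n = b n) (hsr : s = r) :
    opE a s = opE b r := by
  subst hsr
  congr 1
  funext n
  rw [h]

lemma opE_pow (m : ℕ) : (opE (fun _ => (1 : k)) 1) ^ m = opE (fun _ => (1 : k)) m := by
  induction m with
  | zero => rw [pow_zero, ← opE_one]; norm_num
  | succ m ih =>
    rw [pow_succ, ih, opE_mul]
    exact opE_eq _ _ _ _ (fun n => one_mul 1) (by omega)

lemma opE_neg_pow (m : ℕ) :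
    (opE (fun _ => (1 : k)) (-1)) ^ m = opE (fun _ => (1 : k)) (-(m : ℤ)) := by
  induction m with
  | zero => rw [pow_zero, ← opE_one]; norm_num
  | succ m ih =>
    rw [pow_succ, ih, opE_mul]
    exact opE_eq _ _ _ _ (fun n => one_mul 1) (by omega)

variable {q} (hq0 : q ≠ 0)
include hq0

/-- Representation relation `X H = q H X`. -/
lemma rep_xh :
    (opE (fun n => q ^ (n + d)) d - opE (fun n : ℤ => q ^ n) 0) * opE (fun _ => (1 : k)) 1
      = q • (opE (fun _ => (1 : k)) 1 *
          (opE (fun n => q ^ (n + d)) d - opE (fun n : ℤ => q ^ n) 0)) := by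
  have hsub : ∀ (A B C : Module.End k (ℤ →₀ k)), (A - B) * C = A * C - B * C := fun A B C =>
    LinearMap.ext fun f => by simp [Module.End.mul_apply, LinearMap.sub_apply]
  have hsub' : ∀ (A B C : Module.End k (ℤ →₀ k)), A * (B - C) = A * B - A * C := fun A B C =>
    LinearMap.ext fun f => by simp [Module.End.mul_apply, LinearMap.sub_apply, map_sub]
  have hsmul : ∀ (c : k) (A B : Module.End k (ℤ →₀ k)), c • (A - B) = c • A - c • B := fun c A B =>
    LinearMap.ext fun f => by simp [LinearMap.sub_apply, LinearMap.smul_apply, smul_sub]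
  rw [hsub, hsub', hsmul, opE_mul, opE_mul, opE_mul, opE_mul, opE_smul, opE_smul]
  rw [opE_eq (fun n => q ^ (n + 1 + (d : ℤ)) * 1) (fun n => q * (1 * q ^ (n + (d : ℤ)))) (1 + d) ((d : ℤ) + 1)
      (fun n => by beta_reduce; rw [one_mul, mul_one, ← zpow_one_add₀ hq0]; congr 1; ring) (by ring),
    opE_eq (fun n => q ^ (n + 1) * 1) (fun n => q * (1 * q ^ n)) (1 + 0) (0 + 1)
      (fun n => by beta_reduce; rw [one_mul, mul_one, ← zpow_one_add₀ hq0]; congr 1; ring) (by ring)]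

/-- Representation relation `Y H = q⁻¹ H Y`. -/
lemma rep_yh :
    opE (fun n : ℤ => q ^ (-n)) 0 * opE (fun _ => (1 : k)) 1
      = q⁻¹ • (opE (fun _ => (1 : k)) 1 * opE (fun n : ℤ => q ^ (-n)) 0) := by
  rw [opE_mul, opE_mul, opE_smul]
  refine opE_eq _ _ _ _ (fun n => ?_) (by ring)
  rw [one_mul, mul_one, ← zpow_neg_one, ← zpow_add₀ hq0]
  congr 1
  ring

/-- Representation relation `H H⁻¹ = 1`. -/
lemma rep_hh :
    opE (fun _ => (1 : k)) 1 * opE (fun _ => (1 : k)) (-1) = 1 := by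
  rw [opE_mul, ← opE_one]
  exact opE_eq _ _ _ _ (fun n => one_mul 1) (by ring)

/-- Representation relation `H⁻¹ H = 1`. -/
lemma rep_hh' :
    opE (fun _ => (1 : k)) (-1) * opE (fun _ => (1 : k)) 1 = 1 := by
  rw [opE_mul, ← opE_one]
  exact opE_eq _ _ _ _ (fun n => one_mul 1) (by ring)

/-- Representation relation `X Y = q^d H^d − 1`. -/
lemma rep_xy :
    (opE (fun n => q ^ (n + d)) d - opE (fun n : ℤ => q ^ n) 0) * opE (fun n : ℤ => q ^ (-n)) 0
      = q ^ d • (opE (fun _ => (1 : k)) 1) ^ d - 1 := by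
  have hsub : ∀ (A B C : Module.End k (ℤ →₀ k)), (A - B) * C = A * C - B * C := fun A B C =>
    LinearMap.ext fun f => by simp [Module.End.mul_apply, LinearMap.sub_apply]
  have hsub' : ∀ (A B C : Module.End k (ℤ →₀ k)), A * (B - C) = A * B - A * C := fun A B C =>
    LinearMap.ext fun f => by simp [Module.End.mul_apply, LinearMap.sub_apply, map_sub]
  have hsmul : ∀ (c : k) (A B : Module.End k (ℤ →₀ k)), c • (A - B) = c • A - c • B := fun c A B =>
    LinearMap.ext fun f => by simp [LinearMap.sub_apply, LinearMap.smul_apply, smul_sub]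
  rw [hsub, opE_mul, opE_mul, opE_pow, opE_smul, ← opE_one]
  rw [opE_eq (fun n => q ^ (n + 0 + (d : ℤ)) * q ^ (-n)) (fun n => q ^ (d : ℕ) * 1) (0 + d) (d : ℤ)
      (fun n => by
        beta_reduce
        rw [mul_one, ← zpow_add₀ hq0, ← zpow_natCast q d]; congr 1; ring) (by ring),
    opE_eq (fun n => q ^ (n + 0) * q ^ (-n)) (fun _ => (1 : k)) (0 + 0) 0
      (fun n => by beta_reduce; rw [← zpow_add₀ hq0, show (n + 0 + -n : ℤ) = 0 from by ring, zpow_zero]) (by ring)]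

/-- Representation relation `Y X = H^d − 1`. -/
lemma rep_yx :
    opE (fun n : ℤ => q ^ (-n)) 0 * (opE (fun n => q ^ (n + d)) d - opE (fun n : ℤ => q ^ n) 0)
      = (opE (fun _ => (1 : k)) 1) ^ d - 1 := by
  have hsub : ∀ (A B C : Module.End k (ℤ →₀ k)), (A - B) * C = A * C - B * C := fun A B C =>
    LinearMap.ext fun f => by simp [Module.End.mul_apply, LinearMap.sub_apply]
  have hsub' : ∀ (A B C : Module.End k (ℤ →₀ k)), A * (B - C) = A * B - A * C := fun A B C =>
    LinearMap.ext fun f => by simp [Module.End.mul_apply, LinearMap.sub_apply, map_sub]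
  have hsmul : ∀ (c : k) (A B : Module.End k (ℤ →₀ k)), c • (A - B) = c • A - c • B := fun c A B =>
    LinearMap.ext fun f => by simp [LinearMap.sub_apply, LinearMap.smul_apply, smul_sub]
  rw [hsub', opE_mul, opE_mul, opE_pow, ← opE_one]
  rw [opE_eq (fun n => q ^ (-(n + (d : ℤ))) * q ^ (n + (d : ℤ))) (fun _ => (1 : k)) ((d : ℤ) + 0) (d : ℤ)
      (fun n => by
        beta_reduce
        rw [← zpow_add₀ hq0, show (-(n + (d : ℤ)) + (n + (d : ℤ)) : ℤ) = 0 from by ring,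
          zpow_zero]) (by ring),
    opE_eq (fun n => q ^ (-(n + 0)) * q ^ n) (fun _ => (1 : k)) (0 + 0) 0
      (fun n => by
        beta_reduce
        rw [← zpow_add₀ hq0, show (-(n + 0) + n : ℤ) = 0 from by ring, zpow_zero]) (by ring)]

/-- Telescoping: the image of `U(h)x` in the representation. -/
lemma rep_Ux (t : ℕ) :
    (∑ l ∈ Finset.range (t + 1), q ^ (l * d) • (opE (fun _ => (1 : k)) 1) ^ (d * l)) *
        (opE (fun n => q ^ (n + d)) d - opE (fun n : ℤ => q ^ n) 0)
      = opE (fun n => q ^ (n + ((t + 1) * d : ℕ))) (((t + 1) * d : ℕ))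
          - opE (fun n : ℤ => q ^ n) 0 := by
  rw [Finset.sum_mul]
  have step : ∀ l : ℕ,
      (q ^ (l * d) • (opE (fun _ => (1 : k)) 1) ^ (d * l)) *
          (opE (fun n => q ^ (n + d)) d - opE (fun n : ℤ => q ^ n) 0)
        = (fun l : ℕ => opE (fun n => q ^ (n + (l * d : ℕ))) ((l * d : ℕ) : ℤ)) (l + 1)
          - (fun l : ℕ => opE (fun n => q ^ (n + (l * d : ℕ))) ((l * d : ℕ) : ℤ)) l := by
    intro l
    have hsub' : ∀ (A B C : Module.End k (ℤ →₀ k)), A * (B - C) = A * B - A * C := fun A B C =>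
    LinearMap.ext fun f => by simp [Module.End.mul_apply, LinearMap.sub_apply, map_sub]
    have hsmul : ∀ (c : k) (A B : Module.End k (ℤ →₀ k)), c • (A - B) = c • A - c • B := fun c A B =>
    LinearMap.ext fun f => by simp [LinearMap.sub_apply, LinearMap.smul_apply, smul_sub]
    rw [opE_pow, smul_mul_assoc, hsub', opE_mul, opE_mul, hsmul, opE_smul, opE_smul]
    congr 1
    · refine opE_eq _ _ _ _ (fun n => ?_) (by push_cast; ring)
      beta_reduce
      rw [one_mul, ← zpow_natCast q (l * d), ← zpow_add₀ hq0]
      congr 1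
      push_cast
      ring
    · refine opE_eq _ _ _ _ (fun n => ?_) (by push_cast; ring)
      beta_reduce
      rw [one_mul, ← zpow_natCast q (l * d), ← zpow_add₀ hq0]
      congr 1
      push_cast
      ring
  calc ∑ l ∈ Finset.range (t + 1), (q ^ (l * d) • (opE (fun _ => (1 : k)) 1) ^ (d * l)) *
          (opE (fun n => q ^ (n + d)) d - opE (fun n : ℤ => q ^ n) 0)
      = ∑ l ∈ Finset.range (t + 1),
          ((fun l : ℕ => opE (fun n => q ^ (n + (l * d : ℕ))) ((l * d : ℕ) : ℤ)) (l + 1)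
            - (fun l : ℕ => opE (fun n => q ^ (n + (l * d : ℕ))) ((l * d : ℕ) : ℤ)) l) :=
        Finset.sum_congr rfl fun l _ => step l
    _ = opE (fun n => q ^ (n + ((t + 1) * d : ℕ))) (((t + 1) * d : ℕ))
          - opE (fun n : ℤ => q ^ n) 0 := by
        rw [Finset.sum_range_sub (fun l : ℕ => opE (fun n => q ^ (n + (l * d : ℕ))) ((l * d : ℕ) : ℤ)) (t + 1)]
        congr 1
        refine opE_eq _ _ _ _ (fun n => ?_) (by norm_num)
        norm_num

end Rep

section Wsub
variable (t : ℕ)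

/-- Operators preserving the subspace of functions supported on multiples of `t+1`. -/
noncomputable def Wsub : Subalgebra k (Module.End k (ℤ →₀ k)) where
  carrier := {T | ∀ f : ℤ →₀ k, (∀ m : ℤ, ¬ (((t : ℤ) + 1) ∣ m) → f m = 0) →
      ∀ m : ℤ, ¬ (((t : ℤ) + 1) ∣ m) → T f m = 0}
  mul_mem' := by
    intro a b ha hb f hf m hm
    rw [Module.End.mul_apply]
    exact ha (b f) (hb f hf) m hm
  one_mem' := by
    intro f hf m hm
    rw [Module.End.one_apply]
    exact hf m hm
  add_mem' := by
    intro a b ha hb f hf m hm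
    rw [LinearMap.add_apply, Finsupp.add_apply, ha f hf m hm, hb f hf m hm, add_zero]
  zero_mem' := by
    intro f hf m hm
    rw [LinearMap.zero_apply, Finsupp.coe_zero, Pi.zero_apply]
  algebraMap_mem' := by
    intro r f hf m hm
    rw [Module.algebraMap_end_apply, Finsupp.smul_apply, hf m hm, smul_zero]

variable {k t}

lemma mem_Wsub {T : Module.End k (ℤ →₀ k)} :
    T ∈ Wsub k t ↔ ∀ f : ℤ →₀ k, (∀ m : ℤ, ¬ (((t : ℤ) + 1) ∣ m) → f m = 0) →
      ∀ m : ℤ, ¬ (((t : ℤ) + 1) ∣ m) → T f m = 0 := Iff.rfl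

lemma opE_mem_Wsub (a : ℤ → k) (s : ℤ) (hs : ((t : ℤ) + 1) ∣ s) : opE a s ∈ Wsub k t := by
  rw [mem_Wsub]
  intro f hf m hm
  rw [opE_apply, hf (m - s) (fun hd => hm (by
    have : m = (m - s) + s := by ring
    rw [this]
    exact dvd_add hd hs)), mul_zero]

end Wsub

set_option maxHeartbeats 2000000 in
/-- for `q` a primitive `t`-th root of unity with `t > 1` (and
`q^d ≠ 1`), the assignment `h ↦ h^{t+1}`, `x ↦ U(h) x` with
`U(h) = ∑_{l=0}^t q^{ld} h^{dl}`, `y ↦ y` defines a `k`-algebra endomorphism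
of `A` that is not surjective (hence not an automorphism). -/
theorem stmt11 (t : ℕ) (ht : 1 < t) (hq : IsPrimitiveRoot q t)
    (hd : 1 ≤ d) (hqd : q ^ d ≠ 1) :
    ∃ ψ : GWA k q d →ₐ[k] GWA k q d,
      ψ (hGen k q d) = hGen k q d ^ (t + 1) ∧
      ψ (hInv k q d) = hInv k q d ^ (t + 1) ∧
      ψ (xGen k q d) =
        (∑ l ∈ Finset.range (t + 1), q ^ (l * d) • hGen k q d ^ (d * l)) * xGen k q d ∧
      ψ (yGen k q d) = yGen k q d ∧
      ¬ Function.Surjective ψ := by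
  have hqt : q ^ t = 1 := hq.pow_eq_one
  have hq0 : q ≠ 0 := by
    intro h
    rw [h, zero_pow (by omega : t ≠ 0)] at hqt
    exact zero_ne_one hqt
  -- the endomorphism ψ
  set fψ : Fin 4 → GWA k q d := ![hGen k q d ^ (t + 1), hInv k q d ^ (t + 1),
    (∑ l ∈ Finset.range (t + 1), q ^ (l * d) • hGen k q d ^ (d * l)) * xGen k q d,
    yGen k q d] with hfψ
  have compatψ : ∀ ⦃a b : FreeAlgebra k (Fin 4)⦄, GWARel k q d a b →
      (FreeAlgebra.lift k fψ) a = (FreeAlgebra.lift k fψ) b := by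
    intro a b r
    cases r with
    | hh =>
      simp only [map_mul, map_one, FreeAlgebra.lift_ι_apply, hfψ, Matrix.cons_val_zero,
        Matrix.cons_val_one, Matrix.head_cons]
      exact gwa_hpow_hinvpow (t + 1)
    | hh' =>
      simp only [map_mul, map_one, FreeAlgebra.lift_ι_apply, hfψ, Matrix.cons_val_zero,
        Matrix.cons_val_one, Matrix.head_cons]
      exact gwa_hinvpow_hpow (t + 1)
    | xh =>
      simp only [map_mul, map_smul, FreeAlgebra.lift_ι_apply, hfψ, Matrix.cons_val_zero,
        Matrix.cons_val_two, Matrix.tail_cons, Matrix.head_cons]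
      exact gwa_psi_xh hqt
    | yh =>
      simp only [map_mul, map_smul, FreeAlgebra.lift_ι_apply, hfψ, Matrix.cons_val_zero,
        Matrix.cons_val_three, Matrix.tail_cons, Matrix.head_cons]
      exact gwa_psi_yh hqt
    | xy =>
      simp only [map_mul, map_smul, map_sub, map_pow, map_one, FreeAlgebra.lift_ι_apply, hfψ,
        Matrix.cons_val_zero, Matrix.cons_val_two, Matrix.cons_val_three, Matrix.tail_cons,
        Matrix.head_cons]
      exact gwa_psi_xy hqt
    | yx =>
      simp only [map_mul, map_sub, map_pow, map_one, FreeAlgebra.lift_ι_apply, hfψ,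
        Matrix.cons_val_zero, Matrix.cons_val_two, Matrix.cons_val_three, Matrix.tail_cons,
        Matrix.head_cons]
      exact gwa_psi_yx hq0
  set ψ : GWA k q d →ₐ[k] GWA k q d :=
    RingQuot.liftAlgHom k ⟨FreeAlgebra.lift k fψ, compatψ⟩ with hψdef
  have ψgen : ∀ i : Fin 4, ψ (RingQuot.mkAlgHom k (GWARel k q d) (FreeAlgebra.ι k i)) = fψ i := by
    intro i
    rw [hψdef, RingQuot.liftAlgHom_mkAlgHom_apply, FreeAlgebra.lift_ι_apply]
  have ψh : ψ (hGen k q d) = hGen k q d ^ (t + 1) := ψgen 0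
  have ψh' : ψ (hInv k q d) = hInv k q d ^ (t + 1) := ψgen 1
  have ψx : ψ (xGen k q d) =
      (∑ l ∈ Finset.range (t + 1), q ^ (l * d) • hGen k q d ^ (d * l)) * xGen k q d := ψgen 2
  have ψy : ψ (yGen k q d) = yGen k q d := ψgen 3
  refine ⟨ψ, ψh, ψh', ψx, ψy, ?_⟩
  -- the representation Φ
  set fΦ : Fin 4 → Module.End k (ℤ →₀ k) := ![opE (fun _ => (1 : k)) 1, opE (fun _ => (1 : k)) (-1),
    opE (fun n => q ^ (n + d)) d - opE (fun n : ℤ => q ^ n) 0, opE (fun n : ℤ => q ^ (-n)) 0]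
    with hfΦ
  have compatΦ : ∀ ⦃a b : FreeAlgebra k (Fin 4)⦄, GWARel k q d a b →
      (FreeAlgebra.lift k fΦ) a = (FreeAlgebra.lift k fΦ) b := by
    intro a b r
    cases r with
    | hh =>
      simp only [map_mul, map_one, FreeAlgebra.lift_ι_apply, hfΦ, Matrix.cons_val_zero,
        Matrix.cons_val_one, Matrix.head_cons]
      exact rep_hh hq0
    | hh' =>
      simp only [map_mul, map_one, FreeAlgebra.lift_ι_apply, hfΦ, Matrix.cons_val_zero,
        Matrix.cons_val_one, Matrix.head_cons]
      exact rep_hh' hq0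
    | xh =>
      simp only [map_mul, map_smul, FreeAlgebra.lift_ι_apply, hfΦ, Matrix.cons_val_zero,
        Matrix.cons_val_two, Matrix.tail_cons, Matrix.head_cons]
      exact rep_xh d hq0
    | yh =>
      simp only [map_mul, map_smul, FreeAlgebra.lift_ι_apply, hfΦ, Matrix.cons_val_zero,
        Matrix.cons_val_three, Matrix.tail_cons, Matrix.head_cons]
      exact rep_yh hq0
    | xy =>
      simp only [map_mul, map_smul, map_sub, map_pow, map_one, FreeAlgebra.lift_ι_apply, hfΦ,
        Matrix.cons_val_zero, Matrix.cons_val_two, Matrix.cons_val_three, Matrix.tail_cons,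
        Matrix.head_cons]
      exact rep_xy d hq0
    | yx =>
      simp only [map_mul, map_sub, map_pow, map_one, FreeAlgebra.lift_ι_apply, hfΦ,
        Matrix.cons_val_zero, Matrix.cons_val_two, Matrix.cons_val_three, Matrix.tail_cons,
        Matrix.head_cons]
      exact rep_yx d hq0
  set Φ : GWA k q d →ₐ[k] Module.End k (ℤ →₀ k) :=
    RingQuot.liftAlgHom k ⟨FreeAlgebra.lift k fΦ, compatΦ⟩ with hΦdef
  have Φgen : ∀ i : Fin 4, Φ (RingQuot.mkAlgHom k (GWARel k q d) (FreeAlgebra.ι k i)) = fΦ i := by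
    intro i
    rw [hΦdef, RingQuot.liftAlgHom_mkAlgHom_apply, FreeAlgebra.lift_ι_apply]
  have Φh : Φ (hGen k q d) = opE (fun _ => (1 : k)) 1 := Φgen 0
  have Φh' : Φ (hInv k q d) = opE (fun _ => (1 : k)) (-1) := Φgen 1
  have Φx : Φ (xGen k q d) = opE (fun n => q ^ (n + d)) d - opE (fun n : ℤ => q ^ n) 0 := Φgen 2
  have Φy : Φ (yGen k q d) = opE (fun n : ℤ => q ^ (-n)) 0 := Φgen 3
  -- the image of Φ ∘ ψ lands in Wsub
  have key : ∀ a : GWA k q d, Φ (ψ a) ∈ Wsub k t := by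
    intro a
    obtain ⟨b, rfl⟩ := RingQuot.mkAlgHom_surjective k (GWARel k q d) a
    induction b using FreeAlgebra.induction with
    | grade0 r =>
      rw [AlgHom.commutes, AlgHom.commutes, AlgHom.commutes]
      exact (Wsub k t).algebraMap_mem r
    | mul a b ha hb =>
      rw [map_mul, map_mul, map_mul]
      exact mul_mem ha hb
    | add a b ha hb =>
      rw [map_add, map_add, map_add]
      exact add_mem ha hb
    | grade1 i =>
      fin_cases i
      · -- h ↦ h^{t+1}
        show Φ (ψ (hGen k q d)) ∈ Wsub k t
        rw [ψh, map_pow, Φh, opE_pow]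
        exact opE_mem_Wsub _ _ ⟨1, by push_cast; ring⟩
      · show Φ (ψ (hInv k q d)) ∈ Wsub k t
        rw [ψh', map_pow, Φh', opE_neg_pow]
        exact opE_mem_Wsub _ _ ⟨-1, by push_cast; ring⟩
      · show Φ (ψ (xGen k q d)) ∈ Wsub k t
        rw [ψx, map_mul, map_sum, Φx]
        have hU : ∀ l ∈ Finset.range (t + 1),
            Φ (q ^ (l * d) • hGen k q d ^ (d * l))
              = q ^ (l * d) • (opE (fun _ => (1 : k)) 1) ^ (d * l) := by
          intro l _
          rw [map_smul, map_pow, Φh]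
        rw [Finset.sum_congr rfl hU, rep_Ux d hq0 t]
        have m1 : opE (fun n => q ^ (n + ((t + 1) * d : ℕ))) (((t + 1) * d : ℕ) : ℤ) ∈ Wsub k t :=
          opE_mem_Wsub _ _ ⟨(d : ℤ), by push_cast; ring⟩
        have m2 : opE (fun n : ℤ => q ^ n) 0 ∈ Wsub k t := opE_mem_Wsub _ _ (dvd_zero _)
        rw [mem_Wsub]
        intro f hf m hm
        rw [LinearMap.sub_apply, Finsupp.sub_apply, mem_Wsub.mp m1 f hf m hm,
          mem_Wsub.mp m2 f hf m hm, sub_zero]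
      · show Φ (ψ (yGen k q d)) ∈ Wsub k t
        rw [ψy, Φy]
        exact opE_mem_Wsub _ _ (dvd_zero _)
  -- conclude
  intro hsur
  obtain ⟨a, ha⟩ := hsur (hGen k q d)
  have hmem : Φ (hGen k q d) ∈ Wsub k t := by
    rw [← ha]
    exact key a
  rw [Φh, mem_Wsub] at hmem
  have hsupp : ∀ m : ℤ, ¬ (((t : ℤ) + 1) ∣ m) → (Finsupp.single (0 : ℤ) (1 : k)) m = 0 := by
    intro m hm
    rw [Finsupp.single_apply, if_neg]
    intro h0
    exact hm (h0 ▸ dvd_zero _)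
  have h1 : ¬ (((t : ℤ) + 1) ∣ 1) := by
    intro hdvd
    have := Int.le_of_dvd one_pos hdvd
    omega
  have := hmem (Finsupp.single 0 1) hsupp 1 h1
  rw [opE_single] at this
  simp only [zero_add, one_mul, Finsupp.single_eq_same] at this
  exact one_ne_zero this
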